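/- If p is a prime and n is a nonnegative integer with base-p expansion n = n_0 + n_1 p + ... + n_s p^s, then the number of integers m with 0 ≤ m ≤ n such that C(n, m) is not divisible by p equals ∏_{i=0}^{s} (n_i + 1). -/

import Mathlib

open Finset

lemma small_choose_not_dvd {p r j : ℕ} (hp : p.Prime) (hr : r < p) (hj : j ≤ r) :
    ¬ p ∣ r.choose j := by
  intro h
  have : p ∣ r.factorial := by
    rw [← Nat.choose_mul_factorial_mul_factorial hj]
    exact dvd_mul_of_dvd_left (dvd_mul_of_dvd_left h _) _
  exact absurd ((Nat.Prime.dvd_factorial hp).mp this) (not_le.mpr hr)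

lemma step_iff {p : ℕ} (hp : p.Prime) {r N' : ℕ} (hr : r < p) (m : ℕ) :
    ¬ p ∣ (r + p * N').choose m ↔ m % p ≤ r ∧ ¬ p ∣ N'.choose (m / p) := by
  haveI : Fact p.Prime := ⟨hp⟩
  have hmod : (r + p * N') % p = r := by
    rw [Nat.add_mul_mod_self_left, Nat.mod_eq_of_lt hr]
  have hdiv : (r + p * N') / p = N' := by
    rw [Nat.add_mul_div_left _ _ hp.pos, Nat.div_eq_of_lt hr, zero_add]
  have hcong := (Choose.choose_modEq_choose_mod_mul_choose_div_nat
    (p := p) (n := r + p * N') (k := m))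
  rw [hmod, hdiv] at hcong
  have hdvd : p ∣ (r + p * N').choose m ↔ p ∣ r.choose (m % p) * N'.choose (m / p) := by
    constructor <;> intro h
    · exact (Nat.modEq_zero_iff_dvd).mp ((Nat.ModEq.symm hcong).trans
        ((Nat.modEq_zero_iff_dvd).mpr h))
    · exact (Nat.modEq_zero_iff_dvd).mp (hcong.trans ((Nat.modEq_zero_iff_dvd).mpr h))
  rw [hdvd, hp.dvd_mul]
  constructor
  · intro h
    push_neg at h
    refine ⟨?_, h.2⟩
    by_contra hgt
    exact h.1 (by rw [Nat.choose_eq_zero_of_lt (not_le.mp hgt)]; exact dvd_zero p)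
  · rintro ⟨h1, h2⟩ (h | h)
    · exact small_choose_not_dvd hp hr h1 h
    · exact h2 h

lemma key (p : ℕ) (hp : p.Prime) (r N' : ℕ) (hr : r < p) :
    ((range (r + p * N' + 1)).filter (fun m => ¬ p ∣ (r + p * N').choose m)).card =
      (r + 1) * ((range (N' + 1)).filter (fun m => ¬ p ∣ N'.choose m)).card := by
  have hcard : ((range (r + 1)) ×ˢ ((range (N' + 1)).filter (fun m => ¬ p ∣ N'.choose m))).card
      = (r + 1) * ((range (N' + 1)).filter (fun m => ¬ p ∣ N'.choose m)).card := by
    rw [card_product, card_range]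
  rw [← hcard]
  apply card_nbij' (fun m => (m % p, m / p)) (fun x => x.1 + p * x.2)
  · intro m hm
    simp only [mem_coe, mem_filter, mem_range] at hm
    rw [step_iff hp hr] at hm
    simp only [mem_coe, mem_product, mem_filter, mem_range]
    obtain ⟨hmlt, hmr, hnd⟩ := hm
    have hdle : m / p ≤ N' := by
      have : m ≤ r + p * N' := Nat.lt_succ_iff.mp hmlt
      calc m / p ≤ (r + p * N') / p := Nat.div_le_div_right this
        _ = N' := by rw [Nat.add_mul_div_left _ _ hp.pos, Nat.div_eq_of_lt hr, zero_add]
    exact ⟨Nat.lt_succ_of_le hmr, Nat.lt_succ_of_le hdle, hnd⟩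
  · intro x hx
    simp only [mem_coe, mem_product, mem_filter, mem_range] at hx
    obtain ⟨h1, h2, hnd⟩ := hx
    have h1' : x.1 ≤ r := Nat.lt_succ_iff.mp h1
    have h2' : x.2 ≤ N' := Nat.lt_succ_iff.mp h2
    simp only [mem_coe, mem_filter, mem_range]
    have hle : x.1 + p * x.2 ≤ r + p * N' :=
      Nat.add_le_add h1' (Nat.mul_le_mul_left p h2')
    refine ⟨Nat.lt_succ_of_le hle, ?_⟩
    rw [step_iff hp hr]
    have hm : (x.1 + p * x.2) % p = x.1 := by
      rw [Nat.add_mul_mod_self_left, Nat.mod_eq_of_lt (lt_of_le_of_lt h1' hr)]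
    have hd : (x.1 + p * x.2) / p = x.2 := by
      rw [Nat.add_mul_div_left _ _ hp.pos, Nat.div_eq_of_lt (lt_of_le_of_lt h1' hr), zero_add]
    rw [hm, hd]
    exact ⟨h1', hnd⟩
  · intro m _
    exact Nat.mod_add_div m p
  · intro x hx
    simp only [mem_coe, mem_product, mem_filter, mem_range] at hx
    have h1' : x.1 ≤ r := Nat.lt_succ_iff.mp hx.1
    have hlt : x.1 < p := lt_of_le_of_lt h1' hr
    ext
    · simp [Nat.add_mul_mod_self_left, Nat.mod_eq_of_lt hlt]
    · simp [Nat.add_mul_div_left _ _ hp.pos, Nat.div_eq_of_lt hlt]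

theorem fine_count (p : ℕ) (hp : p.Prime) (s : ℕ) (n : ℕ → ℕ)
    (hn : ∀ i ≤ s, n i ≤ p - 1) :
    ((Finset.range ((∑ i ∈ Finset.range (s + 1), n i * p ^ i) + 1)).filter
        (fun m => ¬ p ∣ Nat.choose (∑ i ∈ Finset.range (s + 1), n i * p ^ i) m)).card =
      ∏ i ∈ Finset.range (s + 1), (n i + 1) := by
  induction s generalizing n with
  | zero =>
    simp only [zero_add, Finset.sum_range_one, pow_zero, mul_one, Finset.prod_range_one]
    have h0 : n 0 < p := lt_of_le_of_lt (hn 0 le_rfl)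
      (Nat.sub_lt hp.pos one_pos)
    rw [Finset.filter_true_of_mem, Finset.card_range]
    intro m hm
    exact small_choose_not_dvd hp h0 (Nat.lt_succ_iff.mp (Finset.mem_range.mp hm))
  | succ s ih =>
    have hsum : ∑ i ∈ Finset.range (s + 1 + 1), n i * p ^ i =
        n 0 + p * ∑ i ∈ Finset.range (s + 1), n (i + 1) * p ^ i := by
      rw [Finset.sum_range_succ' (fun i => n i * p ^ i)]
      simp only [pow_zero, mul_one, pow_succ]
      rw [add_comm, Finset.mul_sum]
      congr 1
      apply Finset.sum_congr rfl
      intro i _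
      ring
    have h0 : n 0 < p := lt_of_le_of_lt (hn 0 (Nat.zero_le _)) (Nat.sub_lt hp.pos one_pos)
    rw [hsum, key p hp (n 0) _ h0, ih (fun i => n (i + 1))
      (fun i hi => hn (i + 1) (Nat.succ_le_succ hi))]
    rw [Finset.prod_range_succ' (fun i => n i + 1)]
    ring
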